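/- Let λ ∈ ℝ^K, let G be a graph on [K], and let S be a connected component of the graph G' = ([K], E') where (i,j) ∈ E' iff (i,j) ∈ E and λ_i = λ_j. Let δ = min{|λ_i − λ_j| : (i,j) ∈ E, λ_i ≠ λ_j} > 0 and 0 < ε < δ. Define λ' by λ'_i = λ_i − ε·1{i ∈ S}. Then the set of modes of λ' equals the set of modes of λ. -/

import Mathlib

def IsMode {K : ℕ} (G : SimpleGraph (Fin K)) (lam : Fin K → ℝ) (k : Fin K) : Prop :=
  ∀ l, G.Adj k l → lam l < lam k

/-- The graph `G' = ([K],E')` with `(i,j) ∈ E'` iff `(i,j) ∈ E` and `λ_i = λ_j`. -/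
def levelGraph {K : ℕ} (G : SimpleGraph (Fin K)) (lam : Fin K → ℝ) : SimpleGraph (Fin K) where
  Adj i j := G.Adj i j ∧ lam i = lam j
  symm := ⟨fun i j h => ⟨G.symm.symm i j h.1, h.2.symm⟩⟩
  loopless := ⟨fun i h => G.loopless.irrefl i h.1⟩

open Classical in
/-- Lowering by `ε < δ` all entries of `λ` on a connected component `S` of the level
graph `G'` leaves the set of modes unchanged. -/
theorem modes_invariant_under_component_shift {K : ℕ} (G : SimpleGraph (Fin K))
    (lam : Fin K → ℝ) (S : Set (Fin K))
    (hS : ∃ v, S = ((levelGraph G lam).connectedComponentMk v).supp)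
    (hE : ∃ i j, G.Adj i j)
    (δ : ℝ) (hδpos : 0 < δ)
    (hδmin : ∃ i j, G.Adj i j ∧ lam i ≠ lam j ∧ δ = |lam i - lam j|)
    (hδle : ∀ i j, G.Adj i j → lam i ≠ lam j → δ ≤ |lam i - lam j|)
    (ε : ℝ) (hε : 0 < ε) (hεδ : ε < δ)
    (lam' : Fin K → ℝ)
    (hlam' : ∀ i, lam' i = lam i - (if i ∈ S then ε else 0)) :
    {i | IsMode G lam' i} = {i | IsMode G lam i} := by
  obtain ⟨v, hv⟩ := hS
  -- S is closed under level-graph adjacency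
  have hclosed : ∀ i j, G.Adj i j → lam i = lam j → (i ∈ S ↔ j ∈ S) := by
    intro i j hadj heq
    have hij : (levelGraph G lam).connectedComponentMk i
        = (levelGraph G lam).connectedComponentMk j :=
      SimpleGraph.ConnectedComponent.sound (SimpleGraph.Adj.reachable ⟨hadj, heq⟩)
    simp only [hv, SimpleGraph.ConnectedComponent.mem_supp_iff, hij]
  have key : ∀ i j, G.Adj i j → (lam' j < lam' i ↔ lam j < lam i) := by
    intro i j hadj
    rcases eq_or_ne (lam i) (lam j) with heq | hne
    · have hmem := hclosed i j hadj heq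
      rw [hlam' i, hlam' j]
      by_cases hi : i ∈ S
      · simp [hi, hmem.mp hi, heq]
      · have hj : j ∉ S := fun hj => hi (hmem.mpr hj)
        simp [hi, hj, heq]
    · have hδ := hδle i j hadj hne
      have hci : |(if i ∈ S then ε else 0 : ℝ)| ≤ ε := by
        split <;> simp [le_of_lt hε, abs_of_nonneg (le_of_lt hε)]
      have hcj : |(if j ∈ S then ε else 0 : ℝ)| ≤ ε := by
        split <;> simp [le_of_lt hε, abs_of_nonneg (le_of_lt hε)]
      rw [hlam' i, hlam' j]
      have h1 := abs_le.mp hci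
      have h2 := abs_le.mp hcj
      have h3 : (0:ℝ) ≤ if i ∈ S then ε else 0 := by positivity
      have h4 : (0:ℝ) ≤ if j ∈ S then ε else 0 := by positivity
      rcases abs_cases (lam i - lam j) with ⟨habs, _⟩ | ⟨habs, _⟩ <;>
        rw [habs] at hδ <;> constructor <;> intro h <;> linarith
  ext i
  simp only [Set.mem_setOf_eq, IsMode]
  constructor <;> intro h l hadj
  · exact (key i l hadj).mp (h l hadj)
  · exact (key i l hadj).mpr (h l hadj)
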